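/- Let ζ be a primitive 13th root of unity and let K be the cubic subfield of L = ℚ(ζ), generated by ρ = ζ + ζ⁻¹ + ζ⁵ + ζ⁻⁵. Then the norm from L to K of the unit μ₀ = 13/(1 − ζ)^12 equals (ρ(1 − ρ))^{−8}. -/

import Mathlib

open NumberField IntermediateField Polynomial

set_option maxHeartbeats 4000000 in
set_option synthInstance.maxHeartbeats 400000 in
theorem norm_mu0_eq
    (ζ : CyclotomicField 13 ℚ) (hζ : IsPrimitiveRoot ζ 13) :
    ((Algebra.norm ℚ⟮ζ + ζ⁻¹ + ζ ^ 5 + (ζ ^ 5)⁻¹⟯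
        ((13 : CyclotomicField 13 ℚ) / (1 - ζ) ^ 12) : ℚ⟮ζ + ζ⁻¹ + ζ ^ 5 + (ζ ^ 5)⁻¹⟯) :
          CyclotomicField 13 ℚ) =
      ((ζ + ζ⁻¹ + ζ ^ 5 + (ζ ^ 5)⁻¹) * (1 - (ζ + ζ⁻¹ + ζ ^ 5 + (ζ ^ 5)⁻¹))) ^ (-8 : ℤ) := by
  have h13 : ζ ^ 13 = 1 := hζ.pow_eq_one
  have hzne : ζ ≠ 1 := hζ.ne_one (by norm_num)
  have hz0 : ζ ≠ 0 := hζ.ne_zero (by norm_num)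
  have hsum : 1 + ζ + ζ^2 + ζ^3 + ζ^4 + ζ^5 + ζ^6 + ζ^7 + ζ^8 + ζ^9 + ζ^10 + ζ^11 + ζ^12 = 0 := by
    apply mul_left_cancel₀ (sub_ne_zero.mpr hzne)
    linear_combination h13
  set g : CyclotomicField 13 ℚ := ζ + ζ⁻¹ + ζ ^ 5 + (ζ ^ 5)⁻¹ with hgdef
  have hg : g = ζ + ζ^12 + ζ^5 + ζ^8 := by
    have h1 : ζ⁻¹ = ζ ^ 12 := inv_eq_of_mul_eq_one_left (by linear_combination h13)
    have h2 : (ζ^5)⁻¹ = ζ ^ 8 := inv_eq_of_mul_eq_one_left (by linear_combination h13)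
    rw [hgdef, h1, h2]
  have hcub : g^3 + g^2 - 4*g + 1 = 0 := by
    rw [hg]
    linear_combination (4+9*ζ+4*ζ^2+4*ζ^3+5*ζ^4+9*ζ^5+3*ζ^6+2*ζ^7+9*ζ^8+3*ζ^9+ζ^10+2*ζ^11
      +9*ζ^12+3*ζ^15+3*ζ^16+3*ζ^19+ζ^23) * h13 + 5 * hsum
  have hcyc : IsCyclotomicExtension {13} ℚ (CyclotomicField 13 ℚ) := by
    exact CyclotomicField.isCyclotomicExtension 13 ℚ
  have : FiniteDimensional ℚ (CyclotomicField 13 ℚ) :=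
    IsCyclotomicExtension.finiteDimensional (S := {13}) (K := ℚ) (CyclotomicField 13 ℚ)
  set K : IntermediateField ℚ (CyclotomicField 13 ℚ) := ℚ⟮g⟯ with hK
  -- the cubic is the minimal polynomial of g
  have hgint : IsIntegral ℚ g := IsIntegral.of_finite ℚ g
  have hCirr : Irreducible (X^3 + X^2 - 4*X + 1 : ℚ[X]) := by
    have hmon : (X^3 + X^2 - 4*X + 1 : ℚ[X]).Monic := by monicity!
    have hdeg : (X^3 + X^2 - 4*X + 1 : ℚ[X]).natDegree = 3 := by compute_degree!
    rw [hmon.irreducible_iff_roots_eq_zero_of_degree_le_three (by omega) (by omega)]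
    rw [Multiset.eq_zero_iff_forall_notMem]
    intro x hx
    rw [mem_roots hmon.ne_zero] at hx
    have hx' : x^3 + x^2 - 4*x + 1 = 0 := by
      simpa [IsRoot, eval_pow] using hx
    have hxint : IsIntegral ℤ x := by
      refine ⟨X^3 + X^2 - 4*X + 1, by monicity!, ?_⟩
      have : (aeval x) (X^3 + X^2 - 4*X + 1 : ℤ[X]) = 0 := by
        simp only [map_add, map_sub, map_mul, map_pow, aeval_X, map_ofNat, map_one]
        linear_combination hx'
      simpa [aeval_def] using this
    obtain ⟨n, rfl⟩ := IsIntegrallyClosed.isIntegral_iff.mp hxint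
    have hn : n^3 + n^2 - 4*n + 1 = 0 := by
      rw [algebraMap_int_eq] at hx'
      simp only [eq_intCast, Int.cast_inj] at hx'
      exact_mod_cast hx'
    have hu : IsUnit n := IsUnit.of_mul_eq_one (4 - n - n^2) (by linarith [hn])
    rcases Int.isUnit_iff.mp hu with rfl | rfl <;> omega
  have hminC : minpoly ℚ g = X^3 + X^2 - 4*X + 1 := by
    refine (minpoly.eq_of_irreducible_of_monic hCirr ?_ (by monicity!)).symm
    simp only [map_add, map_sub, map_mul, map_pow, aeval_X, map_ofNat, map_one]
    linear_combination hcub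
  have hK3 : Module.finrank ℚ K = 3 := by
    rw [hK, IntermediateField.adjoin.finrank hgint, hminC]
    compute_degree!
  have hL12 : Module.finrank ℚ (CyclotomicField 13 ℚ) = 12 := by
    have := IsCyclotomicExtension.finrank (n := 13) (CyclotomicField 13 ℚ)
      (Polynomial.cyclotomic.irreducible_rat (by norm_num))
    simpa [Nat.totient_prime (show Nat.Prime 13 by norm_num)] using this
  have : FiniteDimensional K (CyclotomicField 13 ℚ) := FiniteDimensional.right ℚ K _
  have hKL : Module.finrank K (CyclotomicField 13 ℚ) = 4 := by
    have hmul := Module.finrank_mul_finrank ℚ K (CyclotomicField 13 ℚ)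
    rw [hK3, hL12] at hmul
    omega
  -- ℚ⟮ζ⟯ = ⊤
  have hQtop : ℚ⟮ζ⟯ = (⊤ : IntermediateField ℚ (CyclotomicField 13 ℚ)) := by
    rw [eq_top_iff]
    intro x _
    have h1 : Algebra.adjoin ℚ ({ζ} : Set (CyclotomicField 13 ℚ)) = ⊤ :=
      IsCyclotomicExtension.adjoin_primitive_root_eq_top (n := 13) (by exact_mod_cast hζ)
    have hx : x ∈ Algebra.adjoin ℚ ({ζ} : Set (CyclotomicField 13 ℚ)) := h1 ▸ Algebra.mem_top
    exact IntermediateField.algebra_adjoin_le_adjoin ℚ _ hx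
  have htop : K⟮(1 : CyclotomicField 13 ℚ) - ζ⟯ = ⊤ := by
    rw [eq_top_iff]
    intro x _
    have hζmem : ζ ∈ K⟮(1 : CyclotomicField 13 ℚ) - ζ⟯ := by
      have h1 := mem_adjoin_simple_self K ((1 : CyclotomicField 13 ℚ) - ζ)
      have h2 := sub_mem (one_mem K⟮(1 : CyclotomicField 13 ℚ) - ζ⟯) h1
      simpa using h2
    have hle : ℚ⟮ζ⟯ ≤ (K⟮(1 : CyclotomicField 13 ℚ) - ζ⟯).restrictScalars ℚ :=
      adjoin_simple_le_iff.mpr hζmem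
    exact hle (hQtop ▸ mem_top)
  have hint2 : IsIntegral K ((1 : CyclotomicField 13 ℚ) - ζ) := IsIntegral.of_finite K _
  let pb : PowerBasis K (CyclotomicField 13 ℚ) :=
    (IntermediateField.adjoin.powerBasis hint2).map
      ((IntermediateField.equivOfEq htop).trans IntermediateField.topEquiv)
  have hgen : pb.gen = 1 - ζ := by
    simp [pb, IntermediateField.adjoin.powerBasis]
  have hdim : pb.dim = 4 := by rw [← pb.finrank, hKL]
  set ρ : K := IntermediateField.AdjoinSimple.gen ℚ g with hρdef
  have hρmap : algebraMap K (CyclotomicField 13 ℚ) ρ = g :=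
    IntermediateField.AdjoinSimple.algebraMap_gen ℚ g
  set Q : Polynomial K := X^4 + C (ρ - 4) * X^3 + C (ρ^2 - 2*ρ + 5) * X^2
      + C (-2*ρ^2 + 2*ρ - 2) * X + C (ρ^2 - ρ + 1) with hQdef
  have hQmonic : Q.Monic := by rw [hQdef]; monicity!
  have hQdeg : Q.natDegree = 4 := by rw [hQdef]; compute_degree!
  have hQaeval : Polynomial.aeval ((1 : CyclotomicField 13 ℚ) - ζ) Q = 0 := by
    simp only [hQdef, map_add, map_mul, map_pow, aeval_X, aeval_C, map_sub, map_neg,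
      map_ofNat, map_one, hρmap]
    rw [hg]
    linear_combination (ζ + 3*ζ^2 + ζ^5 + 2*ζ^6 + 2*ζ^9 + ζ^13) * h13 + hsum
  have hminQ : minpoly K ((1 : CyclotomicField 13 ℚ) - ζ) = Q := by
    apply Polynomial.eq_of_dvd_of_natDegree_le_of_leadingCoeff (minpoly.dvd K _ hQaeval)
    · have hnd := pb.natDegree_minpoly
      rw [hgen, hdim] at hnd
      omega
    · rw [(minpoly.monic hint2).leadingCoeff, hQmonic.leadingCoeff]
  have hnorm1 : Algebra.norm K ((1 : CyclotomicField 13 ℚ) - ζ) = ρ^2 - ρ + 1 := by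
    have h := Algebra.PowerBasis.norm_gen_eq_coeff_zero_minpoly pb
    rw [hgen, hdim, hminQ] at h
    rw [h, hQdef]
    simp only [coeff_add, coeff_C_mul, coeff_X_pow, coeff_C]
    norm_num
  have h1z : (1 : CyclotomicField 13 ℚ) - ζ ≠ 0 := sub_ne_zero.mpr (Ne.symm hzne)
  have hμ : (13 : CyclotomicField 13 ℚ) / (1 - ζ)^12 * (1 - ζ)^12 = 13 :=
    div_mul_cancel₀ _ (pow_ne_zero _ h1z)
  have hNK : (Algebra.norm K) ((13 : CyclotomicField 13 ℚ) / (1 - ζ)^12) * (ρ^2 - ρ + 1)^12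
      = 13^4 := by
    have h := congrArg (Algebra.norm K) hμ
    rw [map_mul, map_pow, hnorm1] at h
    rw [show (13 : CyclotomicField 13 ℚ) = algebraMap K _ (13 : K) by rw [map_ofNat],
      Algebra.norm_algebraMap, hKL] at h
    exact h
  have hNL : (((Algebra.norm K) ((13 : CyclotomicField 13 ℚ) / (1 - ζ)^12) : K) :
      CyclotomicField 13 ℚ) * (g^2 - g + 1)^12 = 13^4 := by
    have h := congrArg (algebraMap K (CyclotomicField 13 ℚ)) hNK
    simpa [map_mul, map_pow, map_sub, map_add, map_ofNat, hρmap] using h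
  clear_value g
  have hg0 : g ≠ 0 := by
    intro h; rw [h] at hcub; norm_num at hcub
  have hg1 : (1 : CyclotomicField 13 ℚ) - g ≠ 0 := by
    intro h
    have hg1' : g = 1 := by linear_combination -h
    rw [hg1'] at hcub; norm_num at hcub
  have hπ3 : (g^2 - g + 1)^3 = 13 * g^2 * (1-g)^2 := by
    linear_combination (g^3 - 4*g^2 + g + 1) * hcub
  have hπ0 : g^2 - g + 1 ≠ 0 := by
    intro h
    have h2 : (13 : CyclotomicField 13 ℚ) * g^2 * (1-g)^2 = 0 := by rw [← hπ3, h]; ring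
    have h3 : (13 : CyclotomicField 13 ℚ) ≠ 0 := by norm_num
    rcases mul_eq_zero.mp h2 with h4 | h4
    · rcases mul_eq_zero.mp h4 with h5 | h5
      · exact h3 h5
      · exact hg0 (sq_eq_zero_iff.mp h5)
    · exact hg1 (sq_eq_zero_iff.mp h4)
  have hkey : (13 : CyclotomicField 13 ℚ)^4 * (g*(1-g))^8 = (g^2 - g + 1)^12 := by
    linear_combination (-( (g^2-g+1)^9 + (g^2-g+1)^6 * (13*g^2*(1-g)^2)
      + (g^2-g+1)^3 * (13*g^2*(1-g)^2)^2 + (13*g^2*(1-g)^2)^3)) * hπ3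
  rw [show (-8 : ℤ) = -((8:ℕ):ℤ) by norm_num, zpow_neg, zpow_natCast]
  apply eq_inv_of_mul_eq_one_left
  apply mul_right_cancel₀ (pow_ne_zero 12 hπ0)
  linear_combination (g*(1-g))^8 * hNL + hkey
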